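/- Let r₀ > 0 and let φ : [r₀, ∞) → ℝ be continuously differentiable with r^{3/2} φ(r) → 0 as r → ∞, and suppose ∫_{r₀}^∞ (r³ - r₀³)² r^{-2} φ'(r)² dr < ∞. Then ∫_{r₀}^∞ r² φ(r)² dr ≤ (4/9) ∫_{r₀}^∞ (r³ - r₀³)² r^{-2} φ'(r)² dr. -/

import Mathlib

open Set Filter MeasureTheory

theorem hardy_inequality_weighted
    (r₀ : ℝ) (hr₀ : 0 < r₀) (φ φ' : ℝ → ℝ)
    (hderiv : ∀ r ∈ Set.Ici r₀, HasDerivAt φ (φ' r) r)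
    (hcont : ContinuousOn φ' (Set.Ici r₀))
    (hdecay : Tendsto (fun r : ℝ => r ^ ((3:ℝ)/2) * φ r) atTop (nhds 0))
    (hint : IntegrableOn
      (fun r : ℝ => (r ^ 3 - r₀ ^ 3) ^ 2 / r ^ 2 * (φ' r) ^ 2) (Set.Ici r₀)) :
    ∫ r in Set.Ici r₀, r ^ 2 * (φ r) ^ 2
      ≤ (4 / 9) * ∫ r in Set.Ici r₀, (r ^ 3 - r₀ ^ 3) ^ 2 / r ^ 2 * (φ' r) ^ 2 := by
  set g : ℝ → ℝ := fun r => (r ^ 3 - r₀ ^ 3) ^ 2 / r ^ 2 * (φ' r) ^ 2 with hg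
  set f : ℝ → ℝ := fun r => r ^ 2 * (φ r) ^ 2 with hf
  set B : ℝ := ∫ r in Set.Ici r₀, g r with hB
  set F : ℝ → ℝ := fun r => (r ^ 3 - r₀ ^ 3) / 3 * (φ r) ^ 2 with hF
  set F' : ℝ → ℝ := fun r => r ^ 2 * (φ r) ^ 2 + (r ^ 3 - r₀ ^ 3) / 3 * (2 * φ r * φ' r)
    with hF'
  have hφc : ContinuousOn φ (Set.Ici r₀) := fun r hr =>
    (hderiv r hr).continuousAt.continuousWithinAt
  have hFd : ∀ r ∈ Set.Ici r₀, HasDerivAt F (F' r) r := by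
    intro r hr
    have h1 : HasDerivAt (fun r : ℝ => (r ^ 3 - r₀ ^ 3) / 3) (r ^ 2) r := by
      have : HasDerivAt (fun r : ℝ => (r ^ 3 - r₀ ^ 3) / 3) ((3 * r ^ 2 - 0) / 3) r := by
        exact (((hasDerivAt_pow 3 r).sub_const (r₀ ^ 3)).div_const 3).congr_deriv (by ring)
      simpa using this.congr_deriv (by ring)
    have h2 : HasDerivAt (fun r => (φ r) ^ 2) (2 * φ r * φ' r) r := by
      have := (hderiv r hr).fun_pow 2
      simpa [mul_comm, mul_assoc, mul_left_comm] using this.congr_deriv (by ring)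
    simpa [hF, hF'] using (h1.fun_mul h2).congr_deriv (by ring)
  -- pointwise AM-GM
  have hptwise : ∀ r ∈ Set.Ici r₀,
      -((r ^ 3 - r₀ ^ 3) / 3 * (2 * φ r * φ' r)) ≤ (1/2) * f r + (2/9) * g r := by
    intro r hr
    have hrpos : 0 < r := lt_of_lt_of_le hr₀ hr
    have hr2 : (0:ℝ) < r ^ 2 := by positivity
    simp only [hf, hg]
    have h9 : (r ^ 3 - r₀ ^ 3) ^ 2 / r ^ 2 * (φ' r) ^ 2 * r ^ 2
        = ((r ^ 3 - r₀ ^ 3) * φ' r) ^ 2 := by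
      field_simp
    nlinarith [sq_nonneg (3 * (r ^ 2 * φ r) + 2 * ((r ^ 3 - r₀ ^ 3) * φ' r)), h9, hr2,
      mul_pos hr2 hr2]
  -- continuity facts
  have hfc : ContinuousOn f (Set.Ici r₀) :=
    ((continuous_id.pow 2).continuousOn).mul (hφc.pow 2)
  have hgc : ContinuousOn g (Set.Ici r₀) := by
    apply ContinuousOn.mul _ (hcont.pow 2)
    exact ContinuousOn.div
      ((((continuous_id.pow 3).sub continuous_const).pow 2)).continuousOn
      ((continuous_id.pow 2)).continuousOn
      (fun r hr => by
        have h0 : (0:ℝ) < r := lt_of_lt_of_le hr₀ hr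
        positivity)
  have hF'c : ContinuousOn F' (Set.Ici r₀) := by
    refine hfc.add (ContinuousOn.mul ?_ ?_)
    · exact (((continuous_id.pow 3).sub continuous_const).div_const 3).continuousOn
    · exact (continuousOn_const.mul hφc).mul hcont
  have hfnn : ∀ r : ℝ, 0 ≤ f r := fun r => by simp only [hf]; positivity
  have hgnn : ∀ r : ℝ, 0 ≤ g r := fun r => by simp only [hg]; positivity
  -- the key estimate on finite intervals
  have key : ∀ R : ℝ, r₀ ≤ R → ∫ r in r₀..R, f r ≤ 2 * F R + (4/9) * B := by
    intro R hR
    have hIcc : Set.Icc r₀ R ⊆ Set.Ici r₀ := Set.Icc_subset_Ici_self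
    have huIcc : Set.uIcc r₀ R = Set.Icc r₀ R := Set.uIcc_of_le hR
    have hF'i : IntervalIntegrable F' volume r₀ R :=
      ContinuousOn.intervalIntegrable (by rw [huIcc]; exact hF'c.mono hIcc)
    have hfi : IntervalIntegrable f volume r₀ R :=
      ContinuousOn.intervalIntegrable (by rw [huIcc]; exact hfc.mono hIcc)
    have hgi : IntervalIntegrable g volume r₀ R :=
      ContinuousOn.intervalIntegrable (by rw [huIcc]; exact hgc.mono hIcc)
    have heq : ∫ r in r₀..R, F' r = F R := by
      rw [intervalIntegral.integral_eq_sub_of_hasDerivAt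
        (fun x hx => hFd x (hIcc (huIcc ▸ hx))) hF'i]
      simp [hF]
    have hsplit : ∫ r in r₀..R, f r = F R + ∫ r in r₀..R, -(F' r - f r) := by
      rw [intervalIntegral.integral_neg, intervalIntegral.integral_sub hF'i hfi, heq]
      ring
    have hmono : ∫ r in r₀..R, -(F' r - f r)
        ≤ ∫ r in r₀..R, ((1/2) * f r + (2/9) * g r) := by
      apply intervalIntegral.integral_mono_on hR ((hF'i.sub hfi).neg)
        ((hfi.const_mul _).add (hgi.const_mul _))
      intro x hx
      have h := hptwise x (hIcc hx)
      have hx' : F' x - f x = (x ^ 3 - r₀ ^ 3) / 3 * (2 * φ x * φ' x) := by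
        simp only [hF', hf]; ring
      simp only [Pi.neg_apply]
      rw [hx']
      exact h
    have hsum : ∫ r in r₀..R, ((1/2) * f r + (2/9) * g r)
        = (1/2) * (∫ r in r₀..R, f r) + (2/9) * (∫ r in r₀..R, g r) := by
      rw [intervalIntegral.integral_add (hfi.const_mul _) (hgi.const_mul _),
        intervalIntegral.integral_const_mul, intervalIntegral.integral_const_mul]
    have hgB : ∫ r in r₀..R, g r ≤ B := by
      rw [intervalIntegral.integral_of_le hR]
      apply setIntegral_mono_set hint
      · exact Filter.Eventually.of_forall (fun r => hgnn r)
      · exact HasSubset.Subset.eventuallyLE (Set.Ioc_subset_Ioi_self.trans Set.Ioi_subset_Ici_self)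
    linarith [hsplit, hmono, hsum, hgB]
  -- F tends to 0 at infinity
  have hFnn : ∀ R : ℝ, r₀ ≤ R → 0 ≤ F R := by
    intro R hR
    have h3 : r₀ ^ 3 ≤ R ^ 3 := pow_le_pow_left₀ hr₀.le hR 3
    have : 0 ≤ (R ^ 3 - r₀ ^ 3) / 3 := by linarith
    exact mul_nonneg this (sq_nonneg _)
  have hFub : ∀ R : ℝ, r₀ ≤ R → F R ≤ (1/3) * (R ^ ((3:ℝ)/2) * φ R) ^ 2 := by
    intro R hR
    have hR0 : 0 < R := lt_of_lt_of_le hr₀ hR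
    have h1 : (R ^ ((3:ℝ)/2)) ^ 2 = R ^ 3 := by
      rw [← Real.rpow_natCast (R ^ ((3:ℝ)/2)) 2, ← Real.rpow_mul hR0.le,
        ← Real.rpow_natCast R 3]
      norm_num
    have h2 : (R ^ ((3:ℝ)/2) * φ R) ^ 2 = R ^ 3 * (φ R) ^ 2 := by
      rw [mul_pow, h1]
    rw [hF, h2]
    nlinarith [sq_nonneg (φ R), pow_pos hr₀ 3]
  have hsq : Tendsto (fun R : ℝ => (1/3) * (R ^ ((3:ℝ)/2) * φ R) ^ 2) atTop (nhds 0) := by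
    have h0 := (hdecay.mul hdecay).const_mul (1/3 : ℝ)
    simp only [mul_zero, zero_mul] at h0
    refine h0.congr (fun R => ?_)
    ring
  have hFto : Tendsto F atTop (nhds 0) := by
    apply tendsto_of_tendsto_of_tendsto_of_le_of_le' tendsto_const_nhds hsq
    · exact eventually_atTop.2 ⟨r₀, hFnn⟩
    · exact eventually_atTop.2 ⟨r₀, hFub⟩
  -- integrability of f on Ioi r₀
  set b : ℕ → ℝ := fun n => r₀ + n with hb
  have hbtop : Tendsto b atTop atTop :=
    tendsto_atTop_add_const_left atTop r₀ tendsto_natCast_atTop_atTop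
  have hbge : ∀ n : ℕ, r₀ ≤ b n := fun n => le_add_of_nonneg_right n.cast_nonneg
  have hfiIoc : ∀ n : ℕ, IntegrableOn f (Set.Ioc r₀ (b n)) volume := fun n =>
    ((hfc.mono Set.Icc_subset_Ici_self).integrableOn_Icc).mono_set Set.Ioc_subset_Icc_self
  have hnormf : (fun x => ‖f x‖) = f := funext fun x => Real.norm_of_nonneg (hfnn x)
  have hev1 : ∀ᶠ n : ℕ in atTop, F (b n) ≤ 1 :=
    (hFto.comp hbtop).eventually (eventually_le_nhds (by norm_num))
  have hnormbd : ∀ᶠ n : ℕ in atTop, (∫ x in r₀..(b n), ‖f x‖) ≤ 2 + (4/9) * B := by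
    filter_upwards [hev1] with n hn
    rw [hnormf]
    have := key (b n) (hbge n)
    linarith
  have hfIoi : IntegrableOn f (Set.Ioi r₀) volume :=
    integrableOn_Ioi_of_intervalIntegral_norm_bounded (2 + (4/9) * B) r₀ hfiIoc hbtop hnormbd
  -- pass to the limit
  have h1 : Tendsto (fun n : ℕ => ∫ x in r₀..(b n), f x) atTop
      (nhds (∫ x in Set.Ioi r₀, f x)) :=
    intervalIntegral_tendsto_integral_Ioi r₀ hfIoi hbtop
  have h2 : Tendsto (fun n : ℕ => 2 * F (b n) + (4/9) * B) atTop
      (nhds (2 * 0 + (4/9) * B)) := by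
    exact (((hFto.comp hbtop).const_mul 2).add_const _)
  have hle : ∫ x in Set.Ioi r₀, f x ≤ (4/9) * B := by
    have := le_of_tendsto_of_tendsto' h1 h2 (fun n => key (b n) (hbge n))
    simpa using this
  calc ∫ r in Set.Ici r₀, f r = ∫ r in Set.Ioi r₀, f r :=
        MeasureTheory.integral_Ici_eq_integral_Ioi
    _ ≤ (4/9) * B := hle
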